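/- arXiv:2307.15549 — 2 statements merged into one kernel-verified Lean document; each statement's English description precedes it below -/
import Mathlib

section
/- Flow graphs form a separation algebra: the set of flow graphs with the partial multiplication ⋆ and the singleton set of units consisting of the empty flow graph (∅,∅,∅) is a separation algebra; that is, ⋆ is commutative and associative wherever defined, cancellative (if s₁⋆t and s₂⋆t are defined and equal then s₁ = s₂), and s ⋆ (∅,∅,∅) = s for every flow graph s; moreover the ghost multiplication ⌢ is commutative and associative wherever defined. -/
universe u

/-- A flow monoid: a commutative monoid whose natural order
(`m ≤ n ↔ ∃ o, n = m + o`) is a partial order that forms an ω-cpo, with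
continuous addition. `csup` assigns to every ascending chain its join. -/
class FlowMonoid (M : Type u) extends AddCommMonoid M, PartialOrder M, OrderBot M,
    IsOrderedAddMonoid M, CanonicallyOrderedAdd M where
  /-- The join of an ascending chain. -/
  csup : (ℕ → M) → M
  isLUB_csup : ∀ K : ℕ → M, Monotone K → IsLUB (Set.range K) (csup K)
  add_csup : ∀ (n : M) (K : ℕ → M), Monotone K → n + csup K = csup fun i => n + K i

variable {M : Type u} [FlowMonoid M]

/-- Continuity: `f` commutes with joins of ascending chains. -/
def FMCont (f : M → M) : Prop :=
  ∀ K : ℕ → M, Monotone K →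
    IsLUB (Set.range fun i => f (K i)) (f (FlowMonoid.csup K))

/-- A flow graph: a finite set of nodes `X ⊆ ℕ`, continuous edge functions, and
a finitely supported inflow from sources outside `X` into `X`. (The edge
functions of sources outside `X` and the inflow outside its domain are
canonically zero.) -/
structure FlowGraph (M : Type u) [FlowMonoid M] where
  /-- The nodes. -/
  X : Finset ℕ
  /-- The edge functions: `E x y` labels the edge from `x` to `y`. -/
  E : ℕ → ℕ → M → M
  /-- The inflow: `inflow y x` is the flow the graph receives at `x ∈ X` from the
  external node `y ∉ X`. -/
  inflow : ℕ → ℕ → M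
  econt : ∀ x y, x ∈ X → FMCont (E x y)
  edom : ∀ x y, x ∉ X → E x y = fun _ => 0
  inflow_fin : ∀ x, (Function.support fun y => inflow y x).Finite
  inflow_dom : ∀ y x, inflow y x ≠ 0 → y ∉ X ∧ x ∈ X

namespace FlowGraph

/-- One step of the flow fixed-point computation, with inflow `i`. -/
noncomputable def stepWith (h : FlowGraph M) (i : ℕ → ℕ → M) (c : ℕ → M) : ℕ → M :=
  fun x => if x ∈ h.X then (∑ᶠ y, i y x) + ∑ y ∈ h.X, h.E y x (c y) else 0

/-- The flow for a custom inflow `i`, obtained by Kleene iteration: the least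
function satisfying the flow equation. -/
noncomputable def flowWith (h : FlowGraph M) (i : ℕ → ℕ → M) : ℕ → M :=
  fun x => FlowMonoid.csup fun n => (h.stepWith i)^[n] (fun _ => 0) x

/-- The flow of a flow graph. -/
noncomputable def flow (h : FlowGraph M) : ℕ → M := h.flowWith h.inflow

/-- The outflow of a flow graph: `out x y = E x y (flow x)`. -/
noncomputable def out (h : FlowGraph M) (x y : ℕ) : M := h.E x y (h.flow x)

/-- The transfer function: maps an inflow `i` to the resulting outflow at `y`. -/
noncomputable def tf (h : FlowGraph M) (i : ℕ → ℕ → M) (y : ℕ) : M :=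
  ∑ x ∈ h.X, h.E x y (h.flowWith i x)

/-- The ghost multiplication of flow graphs: disjoint union of the node sets and
edges; the inflow of each component is restricted to sources outside the other. -/
def gmul (s t : FlowGraph M) : FlowGraph M where
  X := s.X ∪ t.X
  E := fun x y => if x ∈ s.X then s.E x y else t.E x y
  inflow := fun y x => if y ∈ s.X ∪ t.X then 0 else s.inflow y x + t.inflow y x
  econt := by
    intro x y hx
    try dsimp only
    by_cases hs : x ∈ s.X
    · rw [if_pos hs]; exact s.econt x y hs
    · rw [if_neg hs]
      rcases Finset.mem_union.mp hx with h | h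
      · exact absurd h hs
      · exact t.econt x y h
  edom := by
    intro x y hx
    try dsimp only
    rw [if_neg fun h => hx (Finset.mem_union_left _ h)]
    exact t.edom x y fun h => hx (Finset.mem_union_right _ h)
  inflow_fin := by
    intro x
    refine Set.Finite.subset ((s.inflow_fin x).union (t.inflow_fin x)) ?_
    intro y hy
    rw [Function.mem_support] at hy
    try dsimp only at hy
    by_cases hmem : y ∈ s.X ∪ t.X
    · rw [if_pos hmem] at hy; exact absurd rfl hy
    · rw [if_neg hmem] at hy
      by_cases h1 : s.inflow y x = 0
      · have h2 : t.inflow y x ≠ 0 := fun h2 => hy (by rw [h1, h2, add_zero])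
        exact Set.mem_union_right _ (Function.mem_support.mpr h2)
      · exact Set.mem_union_left _ (Function.mem_support.mpr h1)
  inflow_dom := by
    intro y x hy
    try dsimp only at hy
    by_cases hmem : y ∈ s.X ∪ t.X
    · rw [if_pos hmem] at hy; exact absurd rfl hy
    · rw [if_neg hmem] at hy
      refine ⟨hmem, ?_⟩
      by_cases h1 : s.inflow y x = 0
      · have h2 : t.inflow y x ≠ 0 := fun h2 => hy (by rw [h1, h2, add_zero])
        exact Finset.mem_union_right _ (t.inflow_dom y x h2).2
      · exact Finset.mem_union_left _ (s.inflow_dom y x h1).2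

/-- Definedness of the multiplication `s ⋆ t` of flow graphs: the ghost
multiplication is defined, the inflow expectation of each graph at the mutual
boundary matches the outflow of the other, and the flows are preserved in the
composition (whose result is then `gmul s t`). -/
def MDef (s t : FlowGraph M) : Prop :=
  Disjoint s.X t.X ∧
  (∀ x ∈ s.X, ∀ y ∈ t.X, s.out x y = t.inflow x y ∧ t.out y x = s.inflow y x) ∧
  (∀ x ∈ s.X, (gmul s t).flow x = s.flow x) ∧
  (∀ y ∈ t.X, (gmul s t).flow y = t.flow y)

end FlowGraph

namespace FlowGraph

/-- The empty flow graph `(∅, ∅, ∅)`. -/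
def emptyFG : FlowGraph M where
  X := ∅
  E := fun _ _ => fun _ => 0
  inflow := fun _ _ => 0
  econt := by intro x y hx; exact absurd hx (Finset.notMem_empty x)
  edom := fun _ _ _ => rfl
  inflow_fin := by
    intro x
    apply Set.Finite.subset Set.finite_empty
    intro y hy
    rw [Function.mem_support] at hy
    exact absurd rfl hy
  inflow_dom := fun y x h => absurd rfl h

end FlowGraph

section AuxMonoid

open FlowMonoid

lemma csup_eq {K : ℕ → M} (hK : Monotone K) {m : M} (h : IsLUB (Set.range K) m) :
    csup K = m :=
  (isLUB_csup K hK).unique h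

lemma le_csup {K : ℕ → M} (hK : Monotone K) (n : ℕ) : K n ≤ csup K :=
  (isLUB_csup K hK).1 ⟨n, rfl⟩

lemma csup_le {K : ℕ → M} (hK : Monotone K) {b : M} (h : ∀ n, K n ≤ b) :
    csup K ≤ b :=
  (isLUB_csup K hK).2 (by rintro _ ⟨n, rfl⟩; exact h n)

lemma csup_const (a : M) : csup (fun _ : ℕ => a) = a := by
  apply csup_eq monotone_const
  rw [Set.range_const]
  exact isLUB_singleton

lemma FMCont.mono {f : M → M} (hf : FMCont f) : Monotone f := by
  intro a b hab
  have hK : Monotone (fun n : ℕ => if n = 0 then a else b) := by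
    intro i j hij
    dsimp only
    split <;> split <;> first | rfl | exact hab | omega
  have hcs : csup (fun n : ℕ => if n = 0 then a else b) = b := by
    apply csup_eq hK
    constructor
    · rintro _ ⟨n, rfl⟩; dsimp only; split; exact hab; rfl
    · intro c hc; exact hc ⟨1, by simp⟩
  have := hf _ hK
  rw [hcs] at this
  exact this.1 ⟨0, by simp⟩

lemma FMCont.map_csup {f : M → M} (hf : FMCont f) {K : ℕ → M} (hK : Monotone K) :
    f (csup K) = csup (fun n => f (K n)) :=
  (csup_eq (hf.mono.comp hK) (hf K hK)).symm

lemma csup_add {K L : ℕ → M} (hK : Monotone K) (hL : Monotone L) :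
    csup K + csup L = csup (fun n => K n + L n) := by
  have hKL : Monotone fun n => K n + L n := fun i j h => add_le_add (hK h) (hL h)
  refine le_antisymm ?_ (csup_le hKL fun n => add_le_add (le_csup hK n) (le_csup hL n))
  rw [add_csup _ _ hL]
  refine csup_le (fun i j h => add_le_add_right (hL h) _) fun i => ?_
  rw [add_comm, add_csup _ _ hK]
  refine csup_le (fun i' j h => add_le_add_right (hK h) _) fun j => ?_
  rcases le_total i j with h | h
  · exact le_trans (add_le_add_left (hL h) _) (by rw [add_comm]; exact le_csup hKL j)
  · exact le_trans (add_le_add_right (hK h) _) (by rw [add_comm]; exact le_csup hKL i)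

lemma csup_succ {K : ℕ → M} (hK : Monotone K) :
    csup (fun n => K (n + 1)) = csup K := by
  have hK' : Monotone fun n => K (n + 1) := fun i j h => hK (by omega)
  refine le_antisymm (csup_le hK' fun n => le_csup hK (n + 1))
    (csup_le hK fun n => le_trans (hK n.le_succ) (le_csup hK' n))

lemma csup_sum {ι : Type*} [DecidableEq ι] (S : Finset ι) (f : ι → ℕ → M)
    (hf : ∀ i ∈ S, Monotone (f i)) :
    (∑ i ∈ S, csup (f i)) = csup (fun n => ∑ i ∈ S, f i n) := by
  induction S using Finset.induction_on with
  | empty => simp [csup_const (0 : M)]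
  | @insert a S ha ih =>
    rw [Finset.sum_insert ha, ih (fun i hi => hf i (Finset.mem_insert_of_mem hi)),
      csup_add (hf a (Finset.mem_insert_self a S))
        (fun i j h => Finset.sum_le_sum fun k hk =>
          hf k (Finset.mem_insert_of_mem hk) h)]
    congr 1
    funext n
    rw [Finset.sum_insert ha]

end AuxMonoid

lemma finsum_split (f : ℕ → M) (S : Finset ℕ) (hf : (Function.support f).Finite) :
    ∑ᶠ y, f y = (∑ y ∈ S, f y) + ∑ᶠ y, (if y ∈ S then 0 else f y) := by
  have h1 : (Function.support fun y => if y ∈ S then f y else 0) ⊆ (S : Set ℕ) := by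
    intro y hy
    rw [Function.mem_support] at hy
    by_cases h : y ∈ S
    · exact h
    · rw [if_neg h] at hy; exact absurd rfl hy
  have hg : (Function.support fun y => if y ∈ S then f y else 0).Finite :=
    S.finite_toSet.subset h1
  have hh : (Function.support fun y => if y ∈ S then 0 else f y).Finite := by
    refine hf.subset ?_
    intro y hy
    rw [Function.mem_support] at hy ⊢
    by_cases h : y ∈ S
    · rw [if_pos h] at hy; exact absurd rfl hy
    · rw [if_neg h] at hy; exact hy
  calc ∑ᶠ y, f y
      = ∑ᶠ y, ((if y ∈ S then f y else 0) + (if y ∈ S then 0 else f y)) := by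
        congr 1; funext y; by_cases h : y ∈ S <;> simp [h]
    _ = (∑ᶠ y, if y ∈ S then f y else 0) + ∑ᶠ y, (if y ∈ S then 0 else f y) :=
        finsum_add_distrib hg hh
    _ = (∑ y ∈ S, f y) + ∑ᶠ y, (if y ∈ S then 0 else f y) := by
        rw [finsum_eq_finset_sum_of_support_subset _ h1]
        congr 1
        exact Finset.sum_congr rfl fun y hy => if_pos hy

namespace FlowGraph

variable (h : FlowGraph M) (i : ℕ → ℕ → M)

lemma ext' {s t : FlowGraph M} (hX : s.X = t.X) (hE : s.E = t.E)
    (hin : s.inflow = t.inflow) : s = t := by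
  cases s; cases t; cases hX; cases hE; cases hin; rfl

lemma inflow_zero_of_mem {y : ℕ} (hy : y ∈ h.X) (x : ℕ) : h.inflow y x = 0 := by
  by_contra hne; exact (h.inflow_dom y x hne).1 hy

lemma inflow_zero_of_not_mem (y : ℕ) {x : ℕ} (hx : x ∉ h.X) : h.inflow y x = 0 := by
  by_contra hne; exact hx (h.inflow_dom y x hne).2

lemma stepWith_mono : Monotone (h.stepWith i) := by
  intro c d hcd x
  simp only [stepWith]
  split
  · next hx =>
    exact add_le_add_right
      (Finset.sum_le_sum fun y hy => (h.econt y x hy).mono (hcd y)) _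
  · exact le_rfl

lemma chain_mono : Monotone fun n => (h.stepWith i)^[n] (fun _ => 0) := by
  apply monotone_nat_of_le_succ
  intro n
  induction n with
  | zero => intro x; exact zero_le
  | succ n ih =>
    rw [Function.iterate_succ_apply', Function.iterate_succ_apply']
    exact h.stepWith_mono i ih

lemma chain_mono_apply (x : ℕ) :
    Monotone fun n => (h.stepWith i)^[n] (fun _ => 0) x :=
  fun _ _ hab => h.chain_mono i hab x

lemma flowWith_eq_zero {x : ℕ} (hx : x ∉ h.X) : h.flowWith i x = 0 := by
  have key : ∀ n, (h.stepWith i)^[n] (fun _ => 0) x = 0 := by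
    intro n
    cases n with
    | zero => rfl
    | succ n =>
      rw [Function.iterate_succ_apply']
      simp only [stepWith, if_neg hx]
  calc h.flowWith i x
      = FlowMonoid.csup fun n => (h.stepWith i)^[n] (fun _ => 0) x := rfl
    _ = FlowMonoid.csup (fun _ : ℕ => (0 : M)) := by
        congr 1; funext n; exact key n
    _ = 0 := csup_const 0

lemma flowWith_fixed : h.stepWith i (h.flowWith i) = h.flowWith i := by
  funext x
  by_cases hx : x ∈ h.X
  · have key : ∀ y ∈ h.X, h.E y x (h.flowWith i y)
        = FlowMonoid.csup fun n => h.E y x ((h.stepWith i)^[n] (fun _ => 0) y) :=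
      fun y hy => (h.econt y x hy).map_csup (h.chain_mono_apply i y)
    calc h.stepWith i (h.flowWith i) x
        = (∑ᶠ y, i y x) + ∑ y ∈ h.X, h.E y x (h.flowWith i y) := by
          simp only [stepWith, if_pos hx]
      _ = (∑ᶠ y, i y x) + ∑ y ∈ h.X,
            FlowMonoid.csup (fun n => h.E y x ((h.stepWith i)^[n] (fun _ => 0) y)) := by
          rw [Finset.sum_congr rfl key]
      _ = (∑ᶠ y, i y x) + FlowMonoid.csup
            (fun n => ∑ y ∈ h.X, h.E y x ((h.stepWith i)^[n] (fun _ => 0) y)) := by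
          rw [csup_sum h.X (fun y n => h.E y x ((h.stepWith i)^[n] (fun _ => 0) y))
            (fun y hy a b hab => (h.econt y x hy).mono (h.chain_mono_apply i y hab))]
      _ = FlowMonoid.csup
            (fun n => (∑ᶠ y, i y x) + ∑ y ∈ h.X, h.E y x ((h.stepWith i)^[n] (fun _ => 0) y)) := by
          rw [FlowMonoid.add_csup _ _ (fun a b hab =>
            Finset.sum_le_sum fun y hy => (h.econt y x hy).mono (h.chain_mono i hab y))]
      _ = FlowMonoid.csup (fun n => (h.stepWith i)^[n + 1] (fun _ => 0) x) := by
          congr 1; funext n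
          rw [Function.iterate_succ_apply']
          simp only [stepWith, if_pos hx]
      _ = h.flowWith i x := csup_succ (h.chain_mono_apply i x)
  · rw [h.flowWith_eq_zero i hx]
    simp only [stepWith, if_neg hx]

lemma flowWith_eq_of_mem {x : ℕ} (hx : x ∈ h.X) :
    h.flowWith i x = (∑ᶠ y, i y x) + ∑ y ∈ h.X, h.E y x (h.flowWith i y) := by
  conv_lhs => rw [← h.flowWith_fixed i]
  simp only [stepWith, if_pos hx]

lemma flowWith_le {c : ℕ → M} (hc : h.stepWith i c ≤ c) : h.flowWith i ≤ c := by
  have key : ∀ n, (h.stepWith i)^[n] (fun _ => 0) ≤ c := by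
    intro n
    induction n with
    | zero => intro x; exact zero_le
    | succ n ih =>
      rw [Function.iterate_succ_apply']
      exact le_trans (h.stepWith_mono i ih) hc
  intro x
  exact csup_le (h.chain_mono_apply i x) fun n => key n x

lemma flow_eq_of_mem {x : ℕ} (hx : x ∈ h.X) :
    h.flow x = (∑ᶠ y, h.inflow y x) + ∑ y ∈ h.X, h.E y x (h.flow y) :=
  h.flowWith_eq_of_mem h.inflow hx

lemma gmul_X (s t : FlowGraph M) : (gmul s t).X = s.X ∪ t.X := rfl

lemma gmul_E (s t : FlowGraph M) (x y : ℕ) :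
    (gmul s t).E x y = if x ∈ s.X then s.E x y else t.E x y := rfl

lemma gmul_inflow (s t : FlowGraph M) (y x : ℕ) :
    (gmul s t).inflow y x =
      if y ∈ s.X ∪ t.X then 0 else s.inflow y x + t.inflow y x := rfl

lemma gmul_comm' {s t : FlowGraph M} (hd : Disjoint s.X t.X) :
    gmul s t = gmul t s := by
  apply ext'
  · exact Finset.union_comm _ _
  · funext x y
    rw [gmul_E, gmul_E]
    by_cases hs : x ∈ s.X
    · rw [if_pos hs, if_neg (Finset.disjoint_left.mp hd hs)]
    · rw [if_neg hs]
      by_cases ht : x ∈ t.X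
      · rw [if_pos ht]
      · rw [if_neg ht, s.edom x y hs, t.edom x y ht]
  · funext y x
    rw [gmul_inflow, gmul_inflow, Finset.union_comm, add_comm]

lemma gmul_assoc' (s t u : FlowGraph M) :
    gmul (gmul s t) u = gmul s (gmul t u) := by
  apply ext'
  · exact Finset.union_assoc _ _ _
  · funext x y
    rw [gmul_E, gmul_E, gmul_E, gmul_E, gmul_X]
    by_cases hs : x ∈ s.X
    · rw [if_pos (Finset.mem_union_left _ hs), if_pos hs, if_pos hs]
    · rw [if_neg hs, if_neg hs]
      by_cases ht : x ∈ t.X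
      · rw [if_pos (Finset.mem_union_right _ ht), if_pos ht]
      · rw [if_neg (by simp [hs, ht]), if_neg ht]
  · funext y x
    rw [gmul_inflow, gmul_inflow, gmul_inflow, gmul_inflow, gmul_X, gmul_X]
    by_cases hm : y ∈ s.X ∪ t.X ∪ u.X
    · have hm' : y ∈ s.X ∪ (t.X ∪ u.X) := by rwa [Finset.union_assoc] at hm
      rw [if_pos hm, if_pos hm']
    · have hm' : y ∉ s.X ∪ (t.X ∪ u.X) := by rwa [Finset.union_assoc] at hm
      have h1 : y ∉ s.X ∪ t.X := fun h => hm (Finset.mem_union_left _ h)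
      have h2 : y ∉ t.X ∪ u.X := by
        simp only [Finset.mem_union] at hm ⊢
        tauto
      rw [if_neg hm, if_neg hm', if_neg h1, if_neg h2, add_assoc]

lemma gmul_empty (s : FlowGraph M) : gmul s emptyFG = s := by
  apply ext'
  · exact Finset.union_empty _
  · funext x y
    rw [gmul_E]
    by_cases hs : x ∈ s.X
    · rw [if_pos hs]
    · rw [if_neg hs, s.edom x y hs]; rfl
  · funext y x
    rw [gmul_inflow]
    show (if y ∈ s.X ∪ ∅ then 0 else s.inflow y x + 0) = s.inflow y x
    rw [Finset.union_empty, add_zero]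
    by_cases hy : y ∈ s.X
    · rw [if_pos hy, s.inflow_zero_of_mem hy]
    · rw [if_neg hy]

lemma gmul_flow_right (s H : FlowGraph M) (hdis : Disjoint s.X H.X)
    (h1 : ∀ x ∈ s.X, (gmul s H).flow x = s.flow x)
    (b1 : ∀ a ∈ s.X, ∀ b ∈ H.X, H.inflow a b = s.E a b (s.flow a))
    (b2 : ∀ b ∈ H.X, ∀ a ∈ s.X, H.E b a ((gmul s H).flow b) ≤ s.inflow b a) :
    ∀ b ∈ H.X, (gmul s H).flow b = H.flow b := by
  set G := gmul s H with hGdef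
  have finsumH : ∀ x ∈ H.X,
      ∑ᶠ y, H.inflow y x = (∑ y ∈ s.X, H.inflow y x) + ∑ᶠ y, G.inflow y x := by
    intro x hx
    rw [finsum_split (fun y => H.inflow y x) s.X (H.inflow_fin x)]
    congr 1
    apply finsum_congr
    intro y
    by_cases hys : y ∈ s.X
    · rw [if_pos hys, gmul_inflow, if_pos (Finset.mem_union_left _ hys)]
    · rw [if_neg hys, gmul_inflow]
      by_cases hyH : y ∈ H.X
      · rw [if_pos (Finset.mem_union_right _ hyH), H.inflow_zero_of_mem hyH]
      · rw [if_neg (by simp [hys, hyH]),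
          s.inflow_zero_of_not_mem y (Finset.disjoint_right.mp hdis hx), zero_add]
  have finsumS : ∀ x ∈ s.X,
      ∑ᶠ y, s.inflow y x = (∑ y ∈ H.X, s.inflow y x) + ∑ᶠ y, G.inflow y x := by
    intro x hx
    rw [finsum_split (fun y => s.inflow y x) H.X (s.inflow_fin x)]
    congr 1
    apply finsum_congr
    intro y
    by_cases hyH : y ∈ H.X
    · rw [if_pos hyH, gmul_inflow, if_pos (Finset.mem_union_right _ hyH)]
    · rw [if_neg hyH, gmul_inflow]
      by_cases hys : y ∈ s.X
      · rw [if_pos (Finset.mem_union_left _ hys), s.inflow_zero_of_mem hys]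
      · rw [if_neg (by simp [hys, hyH]),
          H.inflow_zero_of_not_mem y (Finset.disjoint_left.mp hdis hx), add_zero]
  have Esplit : ∀ (x : ℕ) (c : ℕ → M),
      ∑ y ∈ G.X, G.E y x (c y)
        = (∑ y ∈ s.X, s.E y x (c y)) + ∑ y ∈ H.X, H.E y x (c y) := by
    intro x c
    rw [show G.X = s.X ∪ H.X from rfl, Finset.sum_union hdis]
    congr 1
    · exact Finset.sum_congr rfl fun y hy => by rw [gmul_E, if_pos hy]
    · exact Finset.sum_congr rfl fun y hy => by
        rw [gmul_E, if_neg (Finset.disjoint_right.mp hdis hy)]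
  have stepA : ∀ b ∈ H.X, H.flow b ≤ G.flow b := by
    have hc : H.stepWith H.inflow (fun x => if x ∈ H.X then G.flow x else 0)
        ≤ fun x => if x ∈ H.X then G.flow x else 0 := by
      intro x
      simp only [stepWith]
      by_cases hx : x ∈ H.X
      · rw [if_pos hx, if_pos hx]
        have e1 : ∑ y ∈ H.X, H.E y x (if y ∈ H.X then G.flow y else 0)
            = ∑ y ∈ H.X, H.E y x (G.flow y) :=
          Finset.sum_congr rfl fun y hy => by rw [if_pos hy]
        have e2 : ∑ y ∈ s.X, H.inflow y x = ∑ y ∈ s.X, s.E y x (G.flow y) :=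
          Finset.sum_congr rfl fun y hy => by rw [b1 y hy x hx, h1 y hy]
        rw [e1, finsumH x hx, e2,
          G.flow_eq_of_mem (Finset.mem_union_right _ hx : x ∈ s.X ∪ H.X),
          Esplit x G.flow]
        exact le_of_eq (by abel)
      · rw [if_neg hx, if_neg hx]
    intro b hb
    have h3 := H.flowWith_le H.inflow hc b
    rw [if_pos hb] at h3
    exact h3
  have stepB : ∀ b ∈ H.X, G.flow b ≤ H.flow b := by
    set d : ℕ → M :=
      fun x => if x ∈ s.X then s.flow x else if x ∈ H.X then H.flow x else 0
      with hd_def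
    have hc : G.stepWith G.inflow d ≤ d := by
      intro x
      simp only [stepWith]
      by_cases hxG : x ∈ G.X
      · rw [if_pos hxG, Esplit x d]
        have es : ∑ y ∈ s.X, s.E y x (d y) = ∑ y ∈ s.X, s.E y x (s.flow y) :=
          Finset.sum_congr rfl fun y hy => by
            simp only [hd_def]; rw [if_pos hy]
        have eH : ∑ y ∈ H.X, H.E y x (d y) = ∑ y ∈ H.X, H.E y x (H.flow y) :=
          Finset.sum_congr rfl fun y hy => by
            simp only [hd_def]
            rw [if_neg (Finset.disjoint_right.mp hdis hy), if_pos hy]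
        rw [es, eH]
        rcases Finset.mem_union.mp hxG with hxs | hxH
        · have hxd : d x = s.flow x := by simp only [hd_def]; rw [if_pos hxs]
          rw [hxd]
          have key : ∑ y ∈ H.X, H.E y x (H.flow y) ≤ ∑ y ∈ H.X, s.inflow y x :=
            Finset.sum_le_sum fun y hy =>
              le_trans ((H.econt y x hy).mono (stepA y hy)) (b2 y hy x hxs)
          calc (∑ᶠ y, G.inflow y x)
                + ((∑ y ∈ s.X, s.E y x (s.flow y)) + ∑ y ∈ H.X, H.E y x (H.flow y))
              ≤ (∑ᶠ y, G.inflow y x)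
                + ((∑ y ∈ s.X, s.E y x (s.flow y)) + ∑ y ∈ H.X, s.inflow y x) := by
                exact add_le_add_right (add_le_add_right key _) _
            _ = (∑ᶠ y, s.inflow y x) + ∑ y ∈ s.X, s.E y x (s.flow y) := by
                rw [finsumS x hxs]; abel
            _ = s.flow x := (s.flow_eq_of_mem hxs).symm
        · have hxd : d x = H.flow x := by
            simp only [hd_def]
            rw [if_neg (Finset.disjoint_right.mp hdis hxH), if_pos hxH]
          rw [hxd]
          apply le_of_eq
          have e2 : ∑ y ∈ s.X, s.E y x (s.flow y) = ∑ y ∈ s.X, H.inflow y x :=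
            Finset.sum_congr rfl fun y hy => (b1 y hy x hxH).symm
          rw [e2]
          calc (∑ᶠ y, G.inflow y x)
                + ((∑ y ∈ s.X, H.inflow y x) + ∑ y ∈ H.X, H.E y x (H.flow y))
              = (∑ᶠ y, H.inflow y x) + ∑ y ∈ H.X, H.E y x (H.flow y) := by
                rw [finsumH x hxH]; abel
            _ = H.flow x := (H.flow_eq_of_mem hxH).symm
      · rw [if_neg hxG]
        exact zero_le
    intro b hb
    have h3 := G.flowWith_le G.inflow hc b
    simp only [hd_def] at h3
    rw [if_neg (Finset.disjoint_right.mp hdis hb), if_pos hb] at h3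
    exact h3
  exact fun b hb => le_antisymm (stepB b hb) (stepA b hb)

end FlowGraph

open FlowGraph in
/-- Flow graphs form a separation algebra: the multiplication `⋆`
is commutative and associative wherever defined, cancellative, and the empty
flow graph is a unit; moreover the ghost multiplication `⌢` is commutative and
associative wherever defined. -/
theorem flowGraphs_form_separation_algebra :
    -- `⋆` is commutative wherever defined
    (∀ s t : FlowGraph M, MDef s t → MDef t s ∧ gmul s t = gmul t s) ∧
    -- `⋆` is associative wherever defined
    (∀ s t u : FlowGraph M, MDef s t → MDef (gmul s t) u →
      MDef t u ∧ MDef s (gmul t u) ∧ gmul (gmul s t) u = gmul s (gmul t u)) ∧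
    -- `⋆` is cancellative
    (∀ s₁ s₂ t : FlowGraph M, MDef s₁ t → MDef s₂ t →
      gmul s₁ t = gmul s₂ t → s₁ = s₂) ∧
    -- the empty flow graph is a unit
    (∀ s : FlowGraph M, MDef s emptyFG ∧ gmul s emptyFG = s) ∧
    -- `⌢` is commutative wherever defined
    (∀ s t : FlowGraph M, Disjoint s.X t.X → gmul s t = gmul t s) ∧
    -- `⌢` is associative wherever defined
    (∀ s t u : FlowGraph M, Disjoint s.X t.X → Disjoint (gmul s t).X u.X →
      gmul (gmul s t) u = gmul s (gmul t u)) := by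
  refine ⟨?_, ?_, ?_, ?_, fun s t hdis => gmul_comm' hdis,
    fun s t u _ _ => gmul_assoc' s t u⟩
  · -- commutativity of ⋆
    rintro s t ⟨hdis, hb, hf1, hf2⟩
    refine ⟨⟨hdis.symm, ?_, ?_, ?_⟩, gmul_comm' hdis⟩
    · intro x hx y hy
      exact ⟨(hb y hy x hx).2, (hb y hy x hx).1⟩
    · intro x hx
      rw [gmul_comm' hdis.symm]
      exact hf2 x hx
    · intro y hy
      rw [gmul_comm' hdis.symm]
      exact hf1 y hy
  · -- associativity of ⋆
    rintro s t u ⟨hd_st, B_st, F1, F2⟩ ⟨hd_stu, B_stu, F3, F4⟩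
    rw [gmul_X] at hd_stu
    obtain ⟨hd_su, hd_tu⟩ := Finset.disjoint_union_left.mp hd_stu
    have hd_s_tu : Disjoint s.X (t.X ∪ u.X) :=
      Finset.disjoint_union_right.mpr ⟨hd_st, hd_su⟩
    have geq := gmul_assoc' s t u
    have Gs : ∀ x ∈ s.X, (gmul s (gmul t u)).flow x = s.flow x := by
      intro x hx
      rw [← geq, F3 x (Finset.mem_union_left _ hx)]
      exact F1 x hx
    have Gt : ∀ x ∈ t.X, (gmul s (gmul t u)).flow x = t.flow x := by
      intro x hx
      rw [← geq, F3 x (Finset.mem_union_right _ hx)]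
      exact F2 x hx
    have Gu : ∀ x ∈ u.X, (gmul s (gmul t u)).flow x = u.flow x := by
      intro x hx
      rw [← geq]
      exact F4 x hx
    have b1 : ∀ a ∈ s.X, ∀ b ∈ t.X ∪ u.X,
        (gmul t u).inflow a b = s.E a b (s.flow a) := by
      intro a ha b hb
      rw [gmul_inflow, if_neg (Finset.disjoint_left.mp hd_s_tu ha)]
      rcases Finset.mem_union.mp hb with hbt | hbu
      · rw [u.inflow_zero_of_not_mem a (Finset.disjoint_left.mp hd_tu hbt), add_zero]
        exact (B_st a ha b hbt).1.symm
      · rw [t.inflow_zero_of_not_mem a (Finset.disjoint_right.mp hd_tu hbu), zero_add]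
        have h1 := (B_stu a (Finset.mem_union_left _ ha) b hbu).1
        rw [← h1]
        show (gmul s t).E a b ((gmul s t).flow a) = _
        rw [gmul_E, if_pos ha, F1 a ha]
    have b2 : ∀ b ∈ t.X ∪ u.X, ∀ a ∈ s.X,
        (gmul t u).E b a ((gmul s (gmul t u)).flow b) = s.inflow b a := by
      intro b hb a ha
      rcases Finset.mem_union.mp hb with hbt | hbu
      · rw [gmul_E, if_pos hbt, Gt b hbt]
        exact (B_st a ha b hbt).2
      · rw [gmul_E, if_neg (Finset.disjoint_right.mp hd_tu hbu), Gu b hbu]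
        have h2 := (B_stu a (Finset.mem_union_left _ ha) b hbu).2
        rw [gmul_inflow,
          if_neg (by simp [Finset.disjoint_right.mp hd_su hbu,
            Finset.disjoint_right.mp hd_tu hbu]),
          t.inflow_zero_of_not_mem b (Finset.disjoint_left.mp hd_st ha),
          add_zero] at h2
        exact h2
    have Hflow : ∀ b ∈ t.X ∪ u.X,
        (gmul s (gmul t u)).flow b = (gmul t u).flow b :=
      gmul_flow_right s (gmul t u) hd_s_tu Gs b1
        (fun b hb a ha => le_of_eq (b2 b hb a ha))
    refine ⟨⟨hd_tu, ?_, ?_, ?_⟩, ⟨hd_s_tu, ?_, ?_, ?_⟩, geq⟩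
    · -- boundary t u
      intro x hx y hy
      constructor
      · have h1 := (B_stu x (Finset.mem_union_right _ hx) y hy).1
        rw [← h1]
        show t.E x y (t.flow x) = (gmul s t).E x y ((gmul s t).flow x)
        rw [gmul_E, if_neg (Finset.disjoint_right.mp hd_st hx), F2 x hx]
      · have h2 := (B_stu x (Finset.mem_union_right _ hx) y hy).2
        rw [h2, gmul_inflow,
          if_neg (by simp [Finset.disjoint_right.mp hd_su hy,
            Finset.disjoint_right.mp hd_tu hy]),
          s.inflow_zero_of_not_mem y (Finset.disjoint_right.mp hd_st hx), zero_add]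
    · -- flow of gmul t u on t
      intro x hx
      rw [← Hflow x (Finset.mem_union_left _ hx)]
      exact Gt x hx
    · -- flow of gmul t u on u
      intro y hy
      rw [← Hflow y (Finset.mem_union_right _ hy)]
      exact Gu y hy
    · -- boundary s (gmul t u)
      intro x hx y hy
      constructor
      · rw [b1 x hx y hy]
        rfl
      · show (gmul t u).E y x ((gmul t u).flow y) = s.inflow y x
        rw [← Hflow y hy]
        exact b2 y hy x hx
    · -- flow of s in triple
      intro x hx
      exact Gs x hx
    · -- flow of gmul t u in triple
      intro y hy
      exact Hflow y hy
  · -- cancellativity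
    rintro s₁ s₂ t ⟨hd1, hb1, _, _⟩ ⟨hd2, hb2, _, _⟩ heq
    have hX : s₁.X = s₂.X := by
      have h := congrArg FlowGraph.X heq
      rw [gmul_X, gmul_X] at h
      ext a
      constructor
      · intro ha
        rcases Finset.mem_union.mp (h ▸ Finset.mem_union_left t.X ha) with h' | h'
        · exact h'
        · exact absurd h' (Finset.disjoint_left.mp hd1 ha)
      · intro ha
        rcases Finset.mem_union.mp (h ▸ Finset.mem_union_left t.X ha) with h' | h'
        · exact h'
        · exact absurd h' (Finset.disjoint_left.mp hd2 ha)
    have hE : s₁.E = s₂.E := by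
      have h := congrArg FlowGraph.E heq
      funext x y
      by_cases hx : x ∈ s₁.X
      · have h' := congrFun (congrFun h x) y
        rw [gmul_E, gmul_E, if_pos hx, if_pos (by rwa [← hX])] at h'
        exact h'
      · rw [s₁.edom x y hx, s₂.edom x y (by rwa [← hX])]
    have hin : s₁.inflow = s₂.inflow := by
      have h := congrArg FlowGraph.inflow heq
      funext y x
      by_cases hx : x ∈ s₁.X
      · by_cases hy1 : y ∈ s₁.X
        · rw [s₁.inflow_zero_of_mem hy1, s₂.inflow_zero_of_mem (by rwa [← hX])]
        · by_cases hyt : y ∈ t.X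
          · rw [← (hb1 x hx y hyt).2]
            exact (hb2 x (by rwa [← hX]) y hyt).2
          · have h' := congrFun (congrFun h y) x
            rw [gmul_inflow, gmul_inflow, if_neg (by simp [hy1, hyt]),
              if_neg (by rw [← hX]; simp [hy1, hyt]),
              t.inflow_zero_of_not_mem y (Finset.disjoint_left.mp hd1 hx),
              add_zero, add_zero] at h'
            exact h'
      · rw [s₁.inflow_zero_of_not_mem y hx, s₂.inflow_zero_of_not_mem y (by rwa [← hX])]
    exact ext' hX hE hin
  · -- unit
    intro s
    refine ⟨⟨?_, ?_, ?_, ?_⟩, gmul_empty s⟩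
    · show Disjoint s.X (∅ : Finset ℕ)
      exact Finset.disjoint_empty_right _
    · intro x _ y hy
      exact absurd hy (Finset.notMem_empty y)
    · intro x _
      rw [gmul_empty]
    · intro y hy
      exact absurd hy (Finset.notMem_empty y)
end

section
/- The upward-closure family is an approximate ghost multiplication: let ⪯ be an estimator on the flow monoid and define, for flow graphs t and u, [t]♯(u) = { u[in] | u.in ⪯^{t.X} in } if there exists s ⪯ctx t with s ⋆ u defined or there exists v ⪯ctx u with v ⋆ t defined, and [t]♯(u) = ⊤ otherwise. Then the family [·]♯ is an approximate ghost multiplication, i.e. t ⌢ u ⊑ t ⌢♯ u := [u]♯(t) ⋆ [t]♯(u) for all t, u; in particular, if there exists s ⪯ctx t with s ⋆ u defined, then t ⌢ u ∈ [u]♯(t) ⋆ [t]♯(u). -/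
universe u

variable {M : Type u} [FlowMonoid M]

/-- An estimator on the flow monoid: a precongruence that is stable under joins
of ascending chains and over which the edge functions (i.e. the continuous
functions) are monotonic. -/
def IsEstimator (r : M → M → Prop) : Prop :=
  -- (E1) reflexive and transitive
  (∀ m : M, r m m) ∧
  (∀ m n o : M, r m n → r n o → r m o) ∧
  -- (E2) compatible with addition
  (∀ m n o : M, r m n → r (m + o) (n + o)) ∧
  -- (E3) stable under joins of ascending chains
  (∀ K L : ℕ → M, Monotone K → Monotone L → (∀ i, r (K i) (L i)) →
    r (FlowMonoid.csup K) (FlowMonoid.csup L)) ∧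
  -- (E4) edge functions are monotonic
  (∀ f : M → M, FMCont f → ∀ m n : M, r m n → r (f m) (f n))

/-- The estimator induced on flow graphs: same nodes, same inflow, and the
transfer functions are related for every smaller inflow. -/
def ctxLe (r : M → M → Prop) (s₁ s₂ : FlowGraph M) : Prop :=
  s₁.X = s₂.X ∧ s₁.inflow = s₂.inflow ∧
  ∀ i : ℕ → ℕ → M, (∀ y x, i y x ≤ s₁.inflow y x) →
    ∀ y, y ∉ s₁.X → r (s₁.tf i y) (s₂.tf i y)

/-- `inflowLe r Y X i₁ i₂` is the relation `i₁ ⪯^Y i₂` on inflows over node set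
`X`: the inflows agree on all sources outside `Y`, and for each target the sums
of the contributions from `Y` are related by `r`. -/
def inflowLe (r : M → M → Prop) (Y X : Finset ℕ) (i₁ i₂ : ℕ → ℕ → M) : Prop :=
  (∀ y, y ∉ Y → ∀ x, i₁ y x = i₂ y x) ∧
  (∀ x ∈ X, r (∑ y ∈ Y, i₁ y x) (∑ y ∈ Y, i₂ y x))

attribute [local instance] Classical.propDecidable

namespace AGM

open FlowMonoid Function FlowGraph

/-! ### csup toolkit -/

theorem le_csup {K : ℕ → M} (hK : Monotone K) (n : ℕ) : K n ≤ csup K :=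
  (isLUB_csup K hK).1 ⟨n, rfl⟩

theorem csup_le {K : ℕ → M} (hK : Monotone K) {b : M} (h : ∀ n, K n ≤ b) : csup K ≤ b :=
  (isLUB_csup K hK).2 (by rintro _ ⟨n, rfl⟩; exact h n)

theorem csup_mono {K L : ℕ → M} (hK : Monotone K) (hL : Monotone L) (h : ∀ n, K n ≤ L n) :
    csup K ≤ csup L :=
  csup_le hK fun n => (h n).trans (le_csup hL n)

theorem csup_const (c : M) : csup (fun _ : ℕ => c) = c := by
  have h := isLUB_csup (fun _ : ℕ => c) monotone_const
  rw [Set.range_const] at h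
  exact h.unique isLUB_singleton

theorem monotone_shift {K : ℕ → M} (hK : Monotone K) : Monotone fun n => K (n + 1) :=
  fun a b h => hK (by omega)

theorem csup_succ {K : ℕ → M} (hK : Monotone K) : csup (fun n => K (n + 1)) = csup K := by
  apply le_antisymm
  · exact csup_le (monotone_shift hK) fun n => le_csup hK (n + 1)
  · exact csup_le hK fun n => (hK (Nat.le_succ n)).trans (le_csup (monotone_shift hK) n)

theorem csup_add {K L : ℕ → M} (hK : Monotone K) (hL : Monotone L) :
    csup K + csup L = csup fun n => K n + L n := by
  have hKL : Monotone fun n => K n + L n := fun a b h => add_le_add (hK h) (hL h)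
  apply le_antisymm
  · rw [add_csup _ _ hL]
    refine csup_le (fun a b h => add_le_add le_rfl (hL h)) fun i => ?_
    rw [add_comm, add_csup _ _ hK]
    refine csup_le (fun a b h => add_le_add le_rfl (hK h)) fun j => ?_
    calc L i + K j ≤ L (max i j) + K (max i j) :=
          add_le_add (hL (le_max_left _ _)) (hK (le_max_right _ _))
      _ = K (max i j) + L (max i j) := add_comm _ _
      _ ≤ _ := le_csup hKL _
  · exact csup_le hKL fun n => add_le_add (le_csup hK n) (le_csup hL n)

theorem csup_finset_sum {α : Type} (F : Finset α) (f : α → ℕ → M)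
    (hf : ∀ a ∈ F, Monotone (f a)) :
    ∑ a ∈ F, csup (f a) = csup fun n => ∑ a ∈ F, f a n := by
  classical
  induction F using Finset.cons_induction with
  | empty => simp [csup_const (0 : M)]
  | cons a F ha ih =>
    simp only [Finset.sum_cons]
    rw [ih fun b hb => hf b (Finset.mem_cons_of_mem hb)]
    exact csup_add (hf a (Finset.mem_cons_self a F))
      (fun x y h => Finset.sum_le_sum fun b hb => hf b (Finset.mem_cons_of_mem hb) h)

theorem fmcont_mono {f : M → M} (hf : FMCont f) : Monotone f := by
  intro m n hmn
  set K : ℕ → M := fun i => if i = 0 then m else n with hKdef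
  have hK : Monotone K := by
    intro a b hab
    by_cases ha : a = 0 <;> by_cases hb : b = 0 <;>
      simp only [K, ha, hb, if_pos, if_neg, if_true, if_false, ite_true, ite_false] <;>
      first | exact le_rfl | exact hmn | omega
  have hcs : csup K = n := by
    refine (isLUB_csup K hK).unique ?_
    constructor
    · rintro _ ⟨i, rfl⟩
      by_cases h : i = 0 <;> simp [K, h, hmn]
    · intro b hb
      have := hb ⟨1, rfl⟩
      simpa [K] using this
  have h2 := hf K hK
  rw [hcs] at h2
  have : f (K 0) ≤ f n := h2.1 ⟨0, rfl⟩
  simpa [K] using this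

theorem fmcont_csup_comm {f : M → M} (hf : FMCont f) {K : ℕ → M} (hK : Monotone K) :
    f (csup K) = csup fun n => f (K n) :=
  (hf K hK).unique (isLUB_csup _ (fun a b h => fmcont_mono hf (hK h)))

/-! ### finsum toolkit -/

theorem finsum_le {f g : ℕ → M} (hfg : ∀ y, f y ≤ g y) (hg : (support g).Finite) :
    ∑ᶠ y, f y ≤ ∑ᶠ y, g y := by
  have hf : support f ⊆ ↑hg.toFinset := by
    rw [Set.Finite.coe_toFinset]
    intro y hy
    rw [mem_support] at hy ⊢
    intro h0
    exact hy (le_antisymm (h0 ▸ hfg y) (zero_le'))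
  rw [finsum_eq_sum_of_support_subset f hf,
    finsum_eq_sum_of_support_subset g (by rw [hg.coe_toFinset])]
  exact Finset.sum_le_sum fun y _ => hfg y

theorem finsum_split (U : Finset ℕ) (f g : ℕ → M) (hg : (support g).Finite) :
    ∑ᶠ y, (if y ∈ U then f y else g y) =
      (∑ y ∈ U, f y) + ∑ᶠ y, (if y ∈ U then 0 else g y) := by
  classical
  set T : Finset ℕ := U ∪ hg.toFinset with hT
  have h1 : support (fun y => if y ∈ U then f y else g y) ⊆ ↑T := by
    intro y hy
    simp only [mem_support] at hy
    by_cases h : y ∈ U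
    · exact Finset.mem_coe.mpr (Finset.mem_union_left _ h)
    · rw [if_neg h] at hy
      exact Finset.mem_coe.mpr (Finset.mem_union_right _ (hg.mem_toFinset.mpr hy))
  have h2 : support (fun y => if y ∈ U then (0 : M) else g y) ⊆ ↑T := by
    intro y hy
    simp only [mem_support] at hy
    by_cases h : y ∈ U
    · rw [if_pos h] at hy; exact absurd rfl hy
    · rw [if_neg h] at hy
      exact Finset.mem_coe.mpr (Finset.mem_union_right _ (hg.mem_toFinset.mpr hy))
  rw [finsum_eq_sum_of_support_subset _ h1, finsum_eq_sum_of_support_subset _ h2]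
  have key : ∀ y ∈ T, (if y ∈ U then f y else g y) =
      (if y ∈ U then f y else 0) + (if y ∈ U then 0 else g y) := by
    intro y _
    by_cases h : y ∈ U <;> simp [h]
  rw [Finset.sum_congr rfl key, Finset.sum_add_distrib]
  congr 1
  rw [Finset.sum_ite_mem, Finset.inter_eq_right.mpr (hT ▸ Finset.subset_union_left)]

/-! ### flow graph toolkit -/

theorem inflow_zero₁ (a : FlowGraph M) {y x : ℕ} (hy : y ∈ a.X) : a.inflow y x = 0 := by
  by_contra h
  exact absurd hy (a.inflow_dom y x h).1

theorem inflow_zero₂ (a : FlowGraph M) {y x : ℕ} (hx : x ∉ a.X) : a.inflow y x = 0 := by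
  by_contra h
  exact absurd (a.inflow_dom y x h).2 hx

/-- The Kleene iterates of the flow computation. -/
noncomputable def iterF (h : FlowGraph M) (i : ℕ → ℕ → M) (n : ℕ) : ℕ → M :=
  (h.stepWith i)^[n] (fun _ => 0)

theorem iterF_succ (h : FlowGraph M) (i : ℕ → ℕ → M) (n : ℕ) :
    iterF h i (n + 1) = h.stepWith i (iterF h i n) :=
  Function.iterate_succ_apply' (h.stepWith i) n _

theorem flowWith_eq (h : FlowGraph M) (i : ℕ → ℕ → M) (x : ℕ) :
    h.flowWith i x = csup fun n => iterF h i n x := rfl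

theorem stepWith_out (h : FlowGraph M) (i : ℕ → ℕ → M) (c : ℕ → M) {x : ℕ} (hx : x ∉ h.X) :
    h.stepWith i c x = 0 := by
  simp [FlowGraph.stepWith, hx]

theorem stepWith_in (h : FlowGraph M) (i : ℕ → ℕ → M) (c : ℕ → M) {x : ℕ} (hx : x ∈ h.X) :
    h.stepWith i c x = (∑ᶠ y, i y x) + ∑ y ∈ h.X, h.E y x (c y) := by
  simp [FlowGraph.stepWith, hx]

theorem iterF_out (h : FlowGraph M) (i : ℕ → ℕ → M) (n : ℕ) {x : ℕ} (hx : x ∉ h.X) :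
    iterF h i n x = 0 := by
  cases n with
  | zero => rfl
  | succ n => rw [iterF_succ]; exact stepWith_out h i _ hx

theorem flowWith_out (h : FlowGraph M) (i : ℕ → ℕ → M) {x : ℕ} (hx : x ∉ h.X) :
    h.flowWith i x = 0 := by
  rw [flowWith_eq]
  have : (fun n => iterF h i n x) = fun _ => (0 : M) := funext fun n => iterF_out h i n hx
  rw [this, csup_const]

theorem stepWith_mono (h : FlowGraph M) (i : ℕ → ℕ → M) {c c' : ℕ → M}
    (hc : ∀ x, c x ≤ c' x) : ∀ x, h.stepWith i c x ≤ h.stepWith i c' x := by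
  intro x
  by_cases hx : x ∈ h.X
  · rw [stepWith_in h i c hx, stepWith_in h i c' hx]
    exact add_le_add le_rfl
      (Finset.sum_le_sum fun y hy => fmcont_mono (h.econt y x hy) (hc y))
  · rw [stepWith_out h i c hx]
    exact zero_le'

theorem iterF_le_succ (h : FlowGraph M) (i : ℕ → ℕ → M) :
    ∀ n x, iterF h i n x ≤ iterF h i (n + 1) x := by
  intro n
  induction n with
  | zero => intro x; exact zero_le'
  | succ n ih =>
    intro x
    rw [iterF_succ, iterF_succ]
    exact stepWith_mono h i ih x

theorem iterF_chain (h : FlowGraph M) (i : ℕ → ℕ → M) (x : ℕ) :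
    Monotone fun n => iterF h i n x :=
  monotone_nat_of_le_succ fun n => iterF_le_succ h i n x

theorem flowWith_fix (h : FlowGraph M) (i : ℕ → ℕ → M) (x : ℕ) :
    h.stepWith i (h.flowWith i) x = h.flowWith i x := by
  by_cases hx : x ∈ h.X
  · rw [stepWith_in h i _ hx]
    have hE : ∀ y ∈ h.X, h.E y x (h.flowWith i y) = csup fun n => h.E y x (iterF h i n y) :=
      fun y hy => fmcont_csup_comm (h.econt y x hy) (iterF_chain h i y)
    calc (∑ᶠ y, i y x) + ∑ y ∈ h.X, h.E y x (h.flowWith i y)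
        = (∑ᶠ y, i y x) + csup fun n => ∑ y ∈ h.X, h.E y x (iterF h i n y) := by
          rw [← csup_finset_sum h.X (fun y n => h.E y x (iterF h i n y))
            (fun y hy a b hab => fmcont_mono (h.econt y x hy) (iterF_chain h i y hab))]
          exact congrArg _ (Finset.sum_congr rfl hE)
      _ = csup fun n => (∑ᶠ y, i y x) + ∑ y ∈ h.X, h.E y x (iterF h i n y) :=
          add_csup _ _ (fun a b hab => Finset.sum_le_sum fun y hy =>
            fmcont_mono (h.econt y x hy) (iterF_chain h i y hab))
      _ = csup fun n => iterF h i (n + 1) x := by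
          refine congrArg _ (funext fun n => ?_)
          rw [iterF_succ, stepWith_in h i _ hx]
      _ = h.flowWith i x := csup_succ (iterF_chain h i x)
  · rw [stepWith_out h i _ hx, flowWith_out h i hx]

theorem iterF_le_of_fix (h : FlowGraph M) (i : ℕ → ℕ → M) {d : ℕ → M}
    (hd : ∀ x, h.stepWith i d x ≤ d x) : ∀ n x, iterF h i n x ≤ d x := by
  intro n
  induction n with
  | zero => intro x; exact zero_le'
  | succ n ih =>
    intro x
    rw [iterF_succ]
    exact (stepWith_mono h i ih x).trans (hd x)

theorem flowWith_le_of_fix (h : FlowGraph M) (i : ℕ → ℕ → M) {d : ℕ → M}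
    (hd : ∀ x, h.stepWith i d x ≤ d x) : ∀ x, h.flowWith i x ≤ d x := fun x =>
  csup_le (iterF_chain h i x) fun n => iterF_le_of_fix h i hd n x

theorem flowWith_mono_inflow (h : FlowGraph M) {i i' : ℕ → ℕ → M}
    (hfin : ∀ x, (support fun y => i' y x).Finite) (hi : ∀ y x, i y x ≤ i' y x) :
    ∀ x, h.flowWith i x ≤ h.flowWith i' x := by
  have key : ∀ n x, iterF h i n x ≤ iterF h i' n x := by
    intro n
    induction n with
    | zero => intro x; exact le_rfl
    | succ n ih =>
      intro x
      rw [iterF_succ, iterF_succ]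
      by_cases hx : x ∈ h.X
      · rw [stepWith_in h i _ hx, stepWith_in h i' _ hx]
        exact add_le_add (finsum_le (fun y => hi y x) (hfin x))
          (Finset.sum_le_sum fun y hy => fmcont_mono (h.econt y x hy) (ih y))
      · rw [stepWith_out h i _ hx]
        exact zero_le'
  intro x
  exact csup_mono (iterF_chain h i x) (iterF_chain h i' x) fun n => key n x

/-! ### estimator toolkit -/

variable {r : M → M → Prop}

theorem rsum (hr : IsEstimator r) {α : Type} (F : Finset α) (f g : α → M)
    (h : ∀ a ∈ F, r (f a) (g a)) : r (∑ a ∈ F, f a) (∑ a ∈ F, g a) := by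
  classical
  induction F using Finset.cons_induction with
  | empty => simpa using hr.1 0
  | cons a F ha ih =>
    rw [Finset.sum_cons, Finset.sum_cons]
    have h1 : r (f a + ∑ b ∈ F, f b) (f a + ∑ b ∈ F, g b) := by
      rw [add_comm (f a), add_comm (f a)]
      exact hr.2.2.1 _ _ _ (ih fun b hb => h b (Finset.mem_cons_of_mem hb))
    exact hr.2.1 _ _ _ h1 (hr.2.2.1 _ _ _ (h a (Finset.mem_cons_self a F)))

theorem radd (hr : IsEstimator r) {m n o p : M} (h1 : r m n) (h2 : r o p) :
    r (m + o) (n + p) := by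
  have ha : r (m + o) (n + o) := hr.2.2.1 _ _ _ h1
  have hb : r (n + o) (n + p) := by
    rw [add_comm n o, add_comm n p]
    exact hr.2.2.1 _ _ _ h2
  exact hr.2.1 _ _ _ ha hb

theorem flowWith_rel (hr : IsEstimator r) (h : FlowGraph M) (i₁ i₂ : ℕ → ℕ → M)
    (hs : ∀ x ∈ h.X, r (∑ᶠ y, i₁ y x) (∑ᶠ y, i₂ y x)) :
    ∀ x, r (h.flowWith i₁ x) (h.flowWith i₂ x) := by
  have key : ∀ n x, r (iterF h i₁ n x) (iterF h i₂ n x) := by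
    intro n
    induction n with
    | zero => intro x; exact hr.1 0
    | succ n ih =>
      intro x
      rw [iterF_succ, iterF_succ]
      by_cases hx : x ∈ h.X
      · rw [stepWith_in h i₁ _ hx, stepWith_in h i₂ _ hx]
        exact radd hr (hs x hx)
          (rsum hr _ _ _ fun y hy => hr.2.2.2.2 _ (h.econt y x hy) _ _ (ih y))
      · rw [stepWith_out h i₁ _ hx, stepWith_out h i₂ _ hx]
        exact hr.1 0
  intro x
  exact hr.2.2.2.1 _ _ (iterF_chain h i₁ x) (iterF_chain h i₂ x) fun n => key n x

theorem tf_rel (hr : IsEstimator r) (h : FlowGraph M) (i₁ i₂ : ℕ → ℕ → M)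
    (hs : ∀ x ∈ h.X, r (∑ᶠ y, i₁ y x) (∑ᶠ y, i₂ y x)) :
    ∀ x, r (h.tf i₁ x) (h.tf i₂ x) := fun x =>
  rsum hr _ _ _ fun y hy =>
    hr.2.2.2.2 _ (h.econt y x hy) _ _ (flowWith_rel hr h i₁ i₂ hs y)

/-! ### gmul toolkit -/

theorem FlowGraph.ext' {a b : FlowGraph M} (h1 : a.X = b.X) (h2 : a.E = b.E)
    (h3 : a.inflow = b.inflow) : a = b := by
  cases a
  cases b
  simp only at h1 h2 h3
  subst h1 h2 h3
  rfl

theorem gmul_comm {a b : FlowGraph M} (hd : Disjoint a.X b.X) : gmul a b = gmul b a := by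
  refine FlowGraph.ext' (Finset.union_comm _ _) ?_ ?_
  · funext x y
    show (if x ∈ a.X then a.E x y else b.E x y) = (if x ∈ b.X then b.E x y else a.E x y)
    by_cases hxa : x ∈ a.X
    · rw [if_pos hxa, if_neg (Finset.disjoint_left.mp hd hxa)]
    · rw [if_neg hxa]
      by_cases hxb : x ∈ b.X
      · rw [if_pos hxb]
      · rw [if_neg hxb, a.edom x y hxa, b.edom x y hxb]
  · funext y x
    show (if y ∈ a.X ∪ b.X then 0 else a.inflow y x + b.inflow y x) =
      (if y ∈ b.X ∪ a.X then 0 else b.inflow y x + a.inflow y x)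
    rw [Finset.union_comm b.X a.X, add_comm]

/-- The "external" inflow sum: total inflow into `x` from sources outside `U`. -/
noncomputable def extSum (a : FlowGraph M) (U : Finset ℕ) (x : ℕ) : M :=
  ∑ᶠ y, if y ∈ U then 0 else a.inflow y x

/-- The inflow of `a` modified at all sources in `U` to be `f`. -/
noncomputable def modInflow (a : FlowGraph M) (U : Finset ℕ) (f : ℕ → ℕ → M) : ℕ → ℕ → M :=
  fun y x => if y ∈ U then (if x ∈ a.X then f y x else 0) else a.inflow y x

theorem modInflow_fin (a : FlowGraph M) (U : Finset ℕ) (f : ℕ → ℕ → M) (x : ℕ) :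
    (support fun y => modInflow a U f y x).Finite := by
  apply Set.Finite.subset (Set.Finite.union (U : Set ℕ).toFinite (a.inflow_fin x))
  intro y hy
  rw [mem_support] at hy
  by_cases h : y ∈ U
  · exact Set.mem_union_left _ h
  · refine Set.mem_union_right _ ?_
    rw [mem_support]
    simpa [modInflow, h] using hy

theorem finsum_modInflow (a : FlowGraph M) (U : Finset ℕ) (f : ℕ → ℕ → M) {x : ℕ}
    (hx : x ∈ a.X) :
    ∑ᶠ y, modInflow a U f y x = (∑ y ∈ U, f y x) + extSum a U x := by
  unfold modInflow extSum
  rw [finsum_split U _ _ (a.inflow_fin x)]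
  simp [hx]

theorem gmul_step {a b : FlowGraph M} (hd : Disjoint a.X b.X) (c : ℕ → M) {x : ℕ}
    (hx : x ∈ a.X) :
    (gmul a b).stepWith (gmul a b).inflow c x =
      ((∑ y ∈ b.X, b.E y x (c y)) + extSum a b.X x) + ∑ y ∈ a.X, a.E y x (c y) := by
  have hxu : x ∈ (gmul a b).X := Finset.mem_union_left _ hx
  rw [stepWith_in _ _ _ hxu]
  have hin : ∀ y, (gmul a b).inflow y x = if y ∈ b.X then 0 else a.inflow y x := by
    intro y
    show (if y ∈ a.X ∪ b.X then 0 else a.inflow y x + b.inflow y x) = _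
    by_cases hyb : y ∈ b.X
    · rw [if_pos (Finset.mem_union_right _ hyb), if_pos hyb]
    · rw [if_neg hyb]
      by_cases hya : y ∈ a.X
      · rw [if_pos (Finset.mem_union_left _ hya), inflow_zero₁ a hya]
      · rw [if_neg (by simp [hya, hyb]),
          inflow_zero₂ b (Finset.disjoint_left.mp hd hx), add_zero]
  have hin' : ∑ᶠ y, (gmul a b).inflow y x = extSum a b.X x := by
    unfold extSum
    exact finsum_congr hin
  have hsum : ∑ y ∈ (gmul a b).X, (gmul a b).E y x (c y) =
      (∑ y ∈ a.X, a.E y x (c y)) + ∑ y ∈ b.X, b.E y x (c y) := by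
    show ∑ y ∈ a.X ∪ b.X, (if y ∈ a.X then a.E y x else b.E y x) (c y) = _
    rw [Finset.sum_union hd]
    congr 1
    · exact Finset.sum_congr rfl fun y hy => by rw [if_pos hy]
    · exact Finset.sum_congr rfl fun y hy =>
        by rw [if_neg (Finset.disjoint_right.mp hd hy)]
  rw [hin', hsum]
  abel

/-! ### the summarising operator Φ -/

/-- The boundary-modified inflow of the side graph `a`. -/
noncomputable def iA (a u : FlowGraph M) (d : ℕ → M) : ℕ → ℕ → M :=
  modInflow a u.X fun y x => u.E y x (d y)

/-- The flow of the side graph `a` under the boundary-modified inflow. -/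
noncomputable def aF (a u : FlowGraph M) (d : ℕ → M) : ℕ → M :=
  a.flowWith (iA a u d)

theorem finsum_iA (a u : FlowGraph M) (d : ℕ → M) {x : ℕ} (hx : x ∈ a.X) :
    ∑ᶠ y, iA a u d y x = (∑ y ∈ u.X, u.E y x (d y)) + extSum a u.X x :=
  finsum_modInflow a u.X _ hx

/-- The one-step operator on `u`-flows that summarises the side graph `a`. -/
noncomputable def Phi (a u : FlowGraph M) (d : ℕ → M) : ℕ → M :=
  u.stepWith (modInflow u a.X fun y x => a.E y x (aF a u d y)) d

/-- The Kleene iterates of `Phi`. -/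
noncomputable def phiIter (a u : FlowGraph M) (n : ℕ) : ℕ → M :=
  (Phi a u)^[n] (fun _ => 0)

theorem phiIter_succ (a u : FlowGraph M) (n : ℕ) :
    phiIter a u (n + 1) = Phi a u (phiIter a u n) :=
  Function.iterate_succ_apply' (Phi a u) n _

theorem iA_mono (a u : FlowGraph M) {d d' : ℕ → M} (h : ∀ x, d x ≤ d' x) :
    ∀ y x, iA a u d y x ≤ iA a u d' y x := by
  intro y x
  unfold iA modInflow
  by_cases hy : y ∈ u.X
  · by_cases hx : x ∈ a.X
    · simp only [if_pos hy, if_pos hx]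
      exact fmcont_mono (u.econt y x hy) (h y)
    · simp [hy, hx]
  · simp [hy]

theorem aF_mono (a u : FlowGraph M) {d d' : ℕ → M} (h : ∀ x, d x ≤ d' x) :
    ∀ x, aF a u d x ≤ aF a u d' x :=
  flowWith_mono_inflow a (modInflow_fin a u.X _) (iA_mono a u h)

theorem Phi_mono (a u : FlowGraph M) {d d' : ℕ → M} (h : ∀ x, d x ≤ d' x) :
    ∀ x, Phi a u d x ≤ Phi a u d' x := by
  intro x
  unfold Phi
  by_cases hx : x ∈ u.X
  · rw [stepWith_in _ _ _ hx, stepWith_in _ _ _ hx]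
    refine add_le_add (finsum_le (fun y => ?_) (modInflow_fin u a.X _ x))
      (Finset.sum_le_sum fun y hy => fmcont_mono (u.econt y x hy) (h y))
    unfold modInflow
    by_cases hy : y ∈ a.X
    · by_cases hxu : x ∈ u.X
      · simp only [if_pos hy, if_pos hxu]
        exact fmcont_mono (a.econt y x hy) (aF_mono a u h y)
      · simp [hy, hxu]
    · simp [hy]
  · rw [stepWith_out _ _ _ hx]
    exact zero_le'

theorem phiIter_le_succ (a u : FlowGraph M) :
    ∀ n x, phiIter a u n x ≤ phiIter a u (n + 1) x := by
  intro n
  induction n with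
  | zero => intro x; exact zero_le'
  | succ n ih =>
    intro x
    rw [phiIter_succ, phiIter_succ]
    exact Phi_mono a u ih x

theorem phiIter_chain (a u : FlowGraph M) (x : ℕ) : Monotone fun n => phiIter a u n x :=
  monotone_nat_of_le_succ fun n => phiIter_le_succ a u n x

theorem phiIter_out (a u : FlowGraph M) (n : ℕ) {x : ℕ} (hx : x ∉ u.X) :
    phiIter a u n x = 0 := by
  cases n with
  | zero => rfl
  | succ n => rw [phiIter_succ]; exact stepWith_out u _ _ hx

theorem Phi_in (a u : FlowGraph M) (d : ℕ → M) {x : ℕ} (hx : x ∈ u.X) :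
    Phi a u d x = ((∑ y ∈ a.X, a.E y x (aF a u d y)) + extSum u a.X x) +
      ∑ y ∈ u.X, u.E y x (d y) := by
  unfold Phi
  rw [stepWith_in _ _ _ hx, finsum_modInflow u a.X _ hx]

/-! ### decomposition of the combined flow -/

theorem flow_fix (h : FlowGraph M) (x : ℕ) : h.stepWith h.inflow h.flow x = h.flow x :=
  flowWith_fix h h.inflow x

theorem aF_le_flow (a u : FlowGraph M) (hd : Disjoint a.X u.X) :
    ∀ x, aF a u ((gmul a u).flow) x ≤ (gmul a u).flow x := by
  refine flowWith_le_of_fix a _ fun x => ?_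
  by_cases hx : x ∈ a.X
  · rw [stepWith_in _ _ _ hx]
    rw [show (∑ᶠ y, iA a u ((gmul a u).flow) y x) = _ from finsum_iA a u _ hx]
    have := gmul_step hd ((gmul a u).flow) hx
    exact le_of_eq (this.symm.trans (flow_fix (gmul a u) x))
  · rw [stepWith_out _ _ _ hx]
    exact zero_le'

theorem flow_le_aF (a u : FlowGraph M) (hd : Disjoint a.X u.X) :
    ∀ x ∈ a.X, (gmul a u).flow x ≤ aF a u ((gmul a u).flow) x := by
  have key : ∀ n, ∀ x ∈ a.X,
      iterF (gmul a u) (gmul a u).inflow n x ≤ aF a u ((gmul a u).flow) x := by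
    intro n
    induction n with
    | zero => intro x _; exact zero_le'
    | succ n ih =>
      intro x hx
      rw [iterF_succ, gmul_step hd _ hx]
      have step : aF a u ((gmul a u).flow) x =
          ((∑ y ∈ u.X, u.E y x ((gmul a u).flow y)) + extSum a u.X x) +
            ∑ y ∈ a.X, a.E y x (aF a u ((gmul a u).flow) y) := by
        conv_lhs => rw [show aF a u ((gmul a u).flow) x = a.flowWith (iA a u ((gmul a u).flow)) x from rfl,
          ← flowWith_fix a _ x, stepWith_in _ _ _ hx]
        rw [finsum_iA a u _ hx]
        rfl
      rw [step]
      refine add_le_add (add_le_add (Finset.sum_le_sum fun y hy => ?_) le_rfl)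
        (Finset.sum_le_sum fun y hy => ?_)
      · exact fmcont_mono (u.econt y x hy) (le_csup (iterF_chain _ _ y) n)
      · exact fmcont_mono (a.econt y x hy) (ih y hy)
  intro x hx
  exact csup_le (iterF_chain _ _ x) fun n => key n x hx

theorem flow_eq_aF (a u : FlowGraph M) (hd : Disjoint a.X u.X) {x : ℕ} (hx : x ∈ a.X) :
    (gmul a u).flow x = aF a u ((gmul a u).flow) x :=
  le_antisymm (flow_le_aF a u hd x hx) (aF_le_flow a u hd x)

theorem gmul_step' {a b : FlowGraph M} (hd : Disjoint a.X b.X) (c : ℕ → M) {x : ℕ}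
    (hx : x ∈ b.X) :
    (gmul a b).stepWith (gmul a b).inflow c x =
      ((∑ y ∈ a.X, a.E y x (c y)) + extSum b a.X x) + ∑ y ∈ b.X, b.E y x (c y) := by
  rw [show gmul a b = gmul b a from gmul_comm hd]
  exact gmul_step hd.symm c hx

theorem aF_fix (a u : FlowGraph M) (d : ℕ → M) {x : ℕ} (hx : x ∈ a.X) :
    aF a u d x = ((∑ y ∈ u.X, u.E y x (d y)) + extSum a u.X x) +
      ∑ y ∈ a.X, a.E y x (aF a u d y) := by
  conv_lhs => rw [show aF a u d x = a.flowWith (iA a u d) x from rfl,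
    ← flowWith_fix a _ x, stepWith_in _ _ _ hx]
  rw [finsum_iA a u _ hx]
  rfl

theorem phiIter_le_flow (a u : FlowGraph M) (hd : Disjoint a.X u.X) :
    ∀ n x, phiIter a u n x ≤ (gmul a u).flow x := by
  intro n
  induction n with
  | zero => intro x; exact zero_le'
  | succ n ih =>
    intro x
    by_cases hx : x ∈ u.X
    · rw [phiIter_succ, Phi_in a u _ hx]
      have hG : (gmul a u).flow x =
          ((∑ y ∈ a.X, a.E y x ((gmul a u).flow y)) + extSum u a.X x) +
            ∑ y ∈ u.X, u.E y x ((gmul a u).flow y) := by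
        rw [← flow_fix (gmul a u) x, gmul_step' hd _ hx]
      rw [hG]
      refine add_le_add (add_le_add (Finset.sum_le_sum fun y hy => ?_) le_rfl)
        (Finset.sum_le_sum fun y hy => fmcont_mono (u.econt y x hy) (ih y))
      refine fmcont_mono (a.econt y x hy) ?_
      exact (aF_mono a u ih y).trans (aF_le_flow a u hd y)
    · rw [phiIter_out a u _ hx]
      exact zero_le'

theorem gIter_le_phi (a u : FlowGraph M) (hd : Disjoint a.X u.X) :
    ∀ n, (∀ x ∈ u.X, iterF (gmul a u) (gmul a u).inflow n x ≤ phiIter a u n x) ∧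
      (∀ x ∈ a.X, iterF (gmul a u) (gmul a u).inflow n x ≤ aF a u (phiIter a u n) x) := by
  intro n
  induction n with
  | zero => exact ⟨fun x _ => zero_le', fun x _ => zero_le'⟩
  | succ n ih =>
    obtain ⟨ihu, iha⟩ := ih
    constructor
    · intro x hx
      rw [iterF_succ, gmul_step' hd _ hx, phiIter_succ, Phi_in a u _ hx]
      refine add_le_add (add_le_add (Finset.sum_le_sum fun y hy => ?_) le_rfl)
        (Finset.sum_le_sum fun y hy => fmcont_mono (u.econt y x hy) (ihu y hy))
      exact fmcont_mono (a.econt y x hy) (iha y hy)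
    · intro x hx
      rw [iterF_succ, gmul_step hd _ hx, aF_fix a u _ hx]
      refine add_le_add (add_le_add (Finset.sum_le_sum fun y hy => ?_) le_rfl)
        (Finset.sum_le_sum fun y hy => ?_)
      · exact fmcont_mono (u.econt y x hy)
          ((ihu y hy).trans (phiIter_le_succ a u n y))
      · exact fmcont_mono (a.econt y x hy)
          ((iha y hy).trans (aF_mono a u (phiIter_le_succ a u n) y))

theorem flow_eq_csup_phi (a u : FlowGraph M) (hd : Disjoint a.X u.X) {x : ℕ} (hx : x ∈ u.X) :
    (gmul a u).flow x = csup fun n => phiIter a u n x := by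
  apply le_antisymm
  · rw [show (gmul a u).flow x = csup fun n => iterF (gmul a u) (gmul a u).inflow n x from rfl]
    exact csup_mono (iterF_chain _ _ x) (phiIter_chain a u x)
      fun n => (gIter_le_phi a u hd n).1 x hx
  · exact csup_le (phiIter_chain a u x) fun n => phiIter_le_flow a u hd n x

/-! ### the core estimator comparison -/

theorem crossFlow_rel (hr : IsEstimator r) {s t u : FlowGraph M}
    (hst : ctxLe r s t) (hsu : MDef s u) :
    ∀ x ∈ u.X, r ((gmul s u).flow x) ((gmul t u).flow x) := by
  obtain ⟨hX, hin, htf⟩ := hst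
  obtain ⟨hd, hbd, hps, hpu⟩ := hsu
  have hdt : Disjoint t.X u.X := hX ▸ hd
  have hsin : ∀ y ∈ u.X, ∀ z ∈ s.X, s.inflow y z = u.E y z ((gmul s u).flow y) := by
    intro y hy z hz
    rw [← (hbd z hz y hy).2]
    show u.E y z (u.flow y) = u.E y z ((gmul s u).flow y)
    rw [hpu y hy]
  have key : ∀ n x, r (phiIter s u n x) (phiIter t u n x) := by
    intro n
    induction n with
    | zero => intro x; exact hr.1 0
    | succ n ih =>
      intro x
      by_cases hx : x ∈ u.X
      · rw [phiIter_succ, phiIter_succ, Phi_in s u _ hx, Phi_in t u _ hx]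
        refine radd hr (radd hr ?_ ?_)
          (rsum hr _ _ _ fun y hy => hr.2.2.2.2 _ (u.econt y x hy) _ _ (ih y))
        · show r (s.tf (iA s u (phiIter s u n)) x) (t.tf (iA t u (phiIter t u n)) x)
          have h1 : r (s.tf (iA s u (phiIter s u n)) x)
              (t.tf (iA s u (phiIter s u n)) x) := by
            refine htf _ ?_ x (Finset.disjoint_right.mp hd hx)
            intro y z
            show (if y ∈ u.X then (if z ∈ s.X then u.E y z (phiIter s u n y) else 0)
              else s.inflow y z) ≤ s.inflow y z
            by_cases hy : y ∈ u.X
            · by_cases hz : z ∈ s.X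
              · rw [if_pos hy, if_pos hz, hsin y hy z hz]
                exact fmcont_mono (u.econt y z hy) (phiIter_le_flow s u hd n y)
              · rw [if_pos hy, if_neg hz]
                exact zero_le'
            · rw [if_neg hy]
          have h2 : r (t.tf (iA s u (phiIter s u n)) x)
              (t.tf (iA t u (phiIter t u n)) x) := by
            refine tf_rel hr t _ _ (fun z hz => ?_) x
            have hzs : z ∈ s.X := hX ▸ hz
            rw [finsum_iA s u _ hzs, finsum_iA t u _ hz]
            refine radd hr
              (rsum hr _ _ _ fun y hy => hr.2.2.2.2 _ (u.econt y z hy) _ _ (ih y)) ?_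
            show r (extSum s u.X z) (extSum t u.X z)
            unfold extSum
            rw [hin]
            exact hr.1 _
          exact hr.2.1 _ _ _ h1 h2
        · show r (extSum u s.X x) (extSum u t.X x)
          rw [hX]
          exact hr.1 _
      · rw [phiIter_out s u _ hx, phiIter_out t u _ hx]
        exact hr.1 0
  intro x hx
  rw [flow_eq_csup_phi s u hd hx, flow_eq_csup_phi t u hdt hx]
  exact hr.2.2.2.1 _ _ (phiIter_chain s u x) (phiIter_chain t u x) fun n => key n x

/-! ### assembly -/

theorem MDef_symm {a b : FlowGraph M} (h : MDef a b) : MDef b a := by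
  obtain ⟨hd, hb, hfa, hfb⟩ := h
  refine ⟨hd.symm, fun x hx y hy => ⟨(hb y hy x hx).2, (hb y hy x hx).1⟩, ?_, ?_⟩
  · intro x hx
    rw [gmul_comm hd.symm]
    exact hfb x hx
  · intro y hy
    rw [gmul_comm hd.symm]
    exact hfa y hy

theorem main_witness (hr : IsEstimator r) {t u : FlowGraph M}
    (hex : ∃ s : FlowGraph M, ctxLe r s t ∧ MDef s u) :
    ∃ t' u' : FlowGraph M,
      (t'.X = t.X ∧ t'.E = t.E ∧ inflowLe r u.X t.X t.inflow t'.inflow) ∧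
      (u'.X = u.X ∧ u'.E = u.E ∧ inflowLe r t.X u.X u.inflow u'.inflow) ∧
      MDef t' u' ∧ gmul t u = gmul t' u' := by
  obtain ⟨s, hst, hsu⟩ := hex
  have hX : s.X = t.X := hst.1
  have hin : s.inflow = t.inflow := hst.2.1
  have hd : Disjoint s.X u.X := hsu.1
  have hdt : Disjoint t.X u.X := hX ▸ hd
  have crossB : ∀ y ∈ u.X, r ((gmul s u).flow y) ((gmul t u).flow y) :=
    crossFlow_rel hr hst hsu
  have F2 : ∀ x ∈ t.X, (gmul t u).flow x = aF t u ((gmul t u).flow) x :=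
    fun x hx => flow_eq_aF t u hdt hx
  have F3 : ∀ x ∈ u.X, (gmul t u).flow x = aF u t ((gmul t u).flow) x := by
    intro x hx
    have h0 := flow_eq_aF u t hdt.symm (x := x) hx
    rwa [gmul_comm hdt.symm] at h0
  have bnd1 : ∀ y ∈ u.X, ∀ z ∈ s.X, s.inflow y z = u.E y z ((gmul s u).flow y) := by
    intro y hy z hz
    rw [← (hsu.2.1 z hz y hy).2]
    show u.E y z (u.flow y) = u.E y z ((gmul s u).flow y)
    rw [hsu.2.2.2 y hy]
  have bnd2 : ∀ y ∈ s.X, ∀ z ∈ u.X, u.inflow y z = s.E y z (s.flow y) := by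
    intro y hy z hz
    exact ((hsu.2.1 y hy z hz).1).symm
  have sflow_eq : s.inflow = iA s u ((gmul s u).flow) := by
    funext y z
    show s.inflow y z =
      if y ∈ u.X then (if z ∈ s.X then u.E y z ((gmul s u).flow y) else 0) else s.inflow y z
    by_cases hy : y ∈ u.X
    · by_cases hz : z ∈ s.X
      · rw [if_pos hy, if_pos hz]
        exact bnd1 y hy z hz
      · rw [if_pos hy, if_neg hz]
        exact inflow_zero₂ s hz
    · rw [if_neg hy]
  have hdom1 : ∀ y x, iA t u ((gmul t u).flow) y x ≠ 0 → y ∉ t.X ∧ x ∈ t.X := by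
    intro y x hne
    replace hne : (if y ∈ u.X then (if x ∈ t.X then u.E y x ((gmul t u).flow y) else 0)
        else t.inflow y x) ≠ 0 := hne
    by_cases hy : y ∈ u.X
    · rw [if_pos hy] at hne
      by_cases hx : x ∈ t.X
      · exact ⟨Finset.disjoint_right.mp hdt hy, hx⟩
      · rw [if_neg hx] at hne
        exact absurd rfl hne
    · rw [if_neg hy] at hne
      exact t.inflow_dom y x hne
  have hdom2 : ∀ y x, iA u t ((gmul t u).flow) y x ≠ 0 → y ∉ u.X ∧ x ∈ u.X := by
    intro y x hne
    replace hne : (if y ∈ t.X then (if x ∈ u.X then t.E y x ((gmul t u).flow y) else 0)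
        else u.inflow y x) ≠ 0 := hne
    by_cases hy : y ∈ t.X
    · rw [if_pos hy] at hne
      by_cases hx : x ∈ u.X
      · exact ⟨Finset.disjoint_left.mp hdt hy, hx⟩
      · rw [if_neg hx] at hne
        exact absurd rfl hne
    · rw [if_neg hy] at hne
      exact u.inflow_dom y x hne
  set t' : FlowGraph M := ⟨t.X, t.E, iA t u ((gmul t u).flow), t.econt, t.edom,
    modInflow_fin t u.X _, hdom1⟩ with ht'
  set u' : FlowGraph M := ⟨u.X, u.E, iA u t ((gmul t u).flow), u.econt, u.edom,
    modInflow_fin u t.X _, hdom2⟩ with hu'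
  have hEq : gmul t' u' = gmul t u := by
    refine FlowGraph.ext' rfl rfl ?_
    funext y x
    show (if y ∈ t.X ∪ u.X then 0
        else iA t u ((gmul t u).flow) y x + iA u t ((gmul t u).flow) y x) =
      (if y ∈ t.X ∪ u.X then 0 else t.inflow y x + u.inflow y x)
    by_cases hy : y ∈ t.X ∪ u.X
    · rw [if_pos hy, if_pos hy]
    · rw [if_neg hy, if_neg hy]
      have hyt : y ∉ t.X := fun h => hy (Finset.mem_union_left _ h)
      have hyu : y ∉ u.X := fun h => hy (Finset.mem_union_right _ h)
      show (if y ∈ u.X then _ else t.inflow y x) + (if y ∈ t.X then _ else u.inflow y x) = _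
      rw [if_neg hyu, if_neg hyt]
  refine ⟨t', u', ⟨rfl, rfl, ?_, ?_⟩, ⟨rfl, rfl, ?_, ?_⟩, ⟨hdt, ?_, ?_, ?_⟩, hEq.symm⟩
  · -- t' inflow agrees outside u.X
    intro y hy x
    show t.inflow y x = if y ∈ u.X then _ else t.inflow y x
    rw [if_neg hy]
  · -- t' inflow sums related
    intro x hx
    refine rsum hr _ _ _ fun y hy => ?_
    have e1 : t.inflow y x = u.E y x ((gmul s u).flow y) := by
      rw [← hin]
      exact bnd1 y hy x (hX ▸ hx)
    have e2 : t'.inflow y x = u.E y x ((gmul t u).flow y) := by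
      show (if y ∈ u.X then (if x ∈ t.X then _ else 0) else t.inflow y x) = _
      rw [if_pos hy, if_pos hx]
    rw [e1, e2]
    exact hr.2.2.2.2 _ (u.econt y x hy) _ _ (crossB y hy)
  · -- u' inflow agrees outside t.X
    intro y hy x
    show u.inflow y x = if y ∈ t.X then _ else u.inflow y x
    rw [if_neg hy]
  · -- u' inflow sums related
    intro x hx
    have e3 : ∑ y ∈ t.X, u.inflow y x = s.tf s.inflow x := by
      rw [← hX]
      exact Finset.sum_congr rfl fun y hy => bnd2 y hy x hx
    have e4 : ∑ y ∈ t.X, u'.inflow y x = t.tf (iA t u ((gmul t u).flow)) x := by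
      refine Finset.sum_congr rfl fun y hy => ?_
      show (if y ∈ t.X then (if x ∈ u.X then _ else 0) else u.inflow y x) = _
      rw [if_pos hy, if_pos hx]
      show t.E y x ((gmul t u).flow y) = t.E y x (t.flowWith (iA t u ((gmul t u).flow)) y)
      rw [F2 y hy]
      rfl
    rw [e3, e4]
    have h1 : r (s.tf s.inflow x) (t.tf s.inflow x) :=
      hst.2.2 s.inflow (fun _ _ => le_rfl) x (Finset.disjoint_right.mp hd hx)
    have h2 : r (t.tf s.inflow x) (t.tf (iA t u ((gmul t u).flow)) x) := by
      refine tf_rel hr t _ _ (fun z hz => ?_) x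
      have hzs : z ∈ s.X := hX ▸ hz
      rw [sflow_eq, finsum_iA s u _ hzs, finsum_iA t u _ hz]
      refine radd hr
        (rsum hr _ _ _ fun y hy => hr.2.2.2.2 _ (u.econt y z hy) _ _ (crossB y hy)) ?_
      show r (extSum s u.X z) (extSum t u.X z)
      unfold extSum
      rw [hin]
      exact hr.1 _
    exact hr.2.1 _ _ _ h1 h2
  · -- boundary conditions
    intro x hx y hy
    constructor
    · show t.E x y (aF t u ((gmul t u).flow) x) = u'.inflow x y
      rw [← F2 x hx]
      show t.E x y ((gmul t u).flow x) =
        if x ∈ t.X then (if y ∈ u.X then t.E x y ((gmul t u).flow x) else 0) else u.inflow x y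
      rw [if_pos hx, if_pos hy]
    · show u.E y x (aF u t ((gmul t u).flow) y) = t'.inflow y x
      rw [← F3 y hy]
      show u.E y x ((gmul t u).flow y) =
        if y ∈ u.X then (if x ∈ t.X then u.E y x ((gmul t u).flow y) else 0) else t.inflow y x
      rw [if_pos hy, if_pos hx]
  · -- flow preservation on t'
    intro x hx
    rw [hEq]
    exact F2 x hx
  · -- flow preservation on u'
    intro y hy
    rw [hEq]
    exact F3 y hy

end AGM

/-- Predicates over flow graphs: sets of flow graphs plus a top element `⊤`. -/
abbrev FPred (M : Type u) [FlowMonoid M] := WithTop (Set (FlowGraph M))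

/-- Membership of a flow graph in a predicate; every flow graph satisfies `⊤`. -/
def memFP (s : FlowGraph M) (a : FPred M) : Prop :=
  WithTop.recTopCoe True (fun a' => s ∈ a') a

/-- The ghost multiplication `⌢` lifted to predicates (`⊤` is absorbing). -/
def gstarFP (a b : FPred M) : FPred M :=
  WithTop.recTopCoe ⊤
    (fun a' => WithTop.recTopCoe ⊤
      (fun b' => (({w | ∃ s ∈ a', ∃ t ∈ b', Disjoint s.X t.X ∧ w = FlowGraph.gmul s t} :
        Set (FlowGraph M)) : FPred M)) b) a

/-- The multiplication `⋆` lifted to predicates (`⊤` is absorbing). -/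
def starFP (a b : FPred M) : FPred M :=
  WithTop.recTopCoe ⊤
    (fun a' => WithTop.recTopCoe ⊤
      (fun b' => (({w | ∃ s ∈ a', ∃ t ∈ b', FlowGraph.MDef s t ∧ w = FlowGraph.gmul s t} :
        Set (FlowGraph M)) : FPred M)) b) a

/-- The upward-closure family `[t]♯(u)`: all of `u` with its inflow increased
according to `⪯^{t.X}`, provided some `s ⪯ctx t` composes with `u` or some
`v ⪯ctx u` composes with `t`; otherwise `⊤`. -/
noncomputable def gabs (r : M → M → Prop) (t u : FlowGraph M) : FPred M :=
  if (∃ s : FlowGraph M, ctxLe r s t ∧ FlowGraph.MDef s u) ∨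
     (∃ v : FlowGraph M, ctxLe r v u ∧ FlowGraph.MDef v t) then
    (({w : FlowGraph M | w.X = u.X ∧ w.E = u.E ∧ inflowLe r t.X u.X u.inflow w.inflow} :
      Set (FlowGraph M)) : FPred M)
  else ⊤

open FlowGraph in
/-- The upward-closure family is an approximate ghost
multiplication: `t ⌢ u ⊑ t ⌢♯ u := [u]♯(t) ⋆ [t]♯(u)` for all flow graphs
`t`, `u`; in particular, if some `s ⪯ctx t` composes with `u`, then
`t ⌢ u ∈ [u]♯(t) ⋆ [t]♯(u)`. -/
theorem approximate_ghost_multiplication (r : M → M → Prop) (hr : IsEstimator r) :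
    (∀ t u : FlowGraph M,
      gstarFP (({t} : Set (FlowGraph M)) : FPred M) (({u} : Set (FlowGraph M)) : FPred M) ≤
        starFP (gabs r u t) (gabs r t u)) ∧
    (∀ t u : FlowGraph M, (∃ s : FlowGraph M, ctxLe r s t ∧ MDef s u) →
      memFP (gmul t u) (starFP (gabs r u t) (gabs r t u))) := by
  have main : ∀ t u : FlowGraph M, (∃ s : FlowGraph M, ctxLe r s t ∧ MDef s u) →
      gmul t u ∈ {w : FlowGraph M |
        ∃ a ∈ {w : FlowGraph M | w.X = t.X ∧ w.E = t.E ∧ inflowLe r u.X t.X t.inflow w.inflow},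
        ∃ b ∈ {w : FlowGraph M | w.X = u.X ∧ w.E = u.E ∧ inflowLe r t.X u.X u.inflow w.inflow},
        MDef a b ∧ gmul t u = gmul a b} := by
    intro t u hex
    obtain ⟨t', u', h1, h2, h3, h4⟩ := AGM.main_witness hr hex
    exact ⟨t', h1, u', h2, h3, h4⟩
  constructor
  · intro t u
    by_cases hc : (∃ s : FlowGraph M, ctxLe r s t ∧ MDef s u) ∨
        (∃ v : FlowGraph M, ctxLe r v u ∧ MDef v t)
    · have hg1 : gabs r u t =
          (({w : FlowGraph M | w.X = t.X ∧ w.E = t.E ∧ inflowLe r u.X t.X t.inflow w.inflow} :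
            Set (FlowGraph M)) : FPred M) := by
        unfold gabs
        exact if_pos (Or.symm hc)
      have hg2 : gabs r t u =
          (({w : FlowGraph M | w.X = u.X ∧ w.E = u.E ∧ inflowLe r t.X u.X u.inflow w.inflow} :
            Set (FlowGraph M)) : FPred M) := by
        unfold gabs
        exact if_pos hc
      rw [hg1, hg2]
      unfold starFP gstarFP
      simp only [WithTop.recTopCoe_coe]
      refine WithTop.coe_le_coe.mpr fun w hw => ?_
      obtain ⟨s0, hs0, t0, ht0, hdisj, heqw⟩ := hw
      rw [Set.mem_singleton_iff] at hs0 ht0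
      subst hs0
      subst ht0
      subst heqw
      rcases hc with hA | hB
      · exact main s0 t0 hA
      · obtain ⟨a, ha, b, hb, hab, heq⟩ := main t0 s0 hB
        exact ⟨b, hb, a, ha, AGM.MDef_symm hab,
          ((AGM.gmul_comm hdisj).trans heq).trans (AGM.gmul_comm hab.1)⟩
    · have hg1 : gabs r u t = ⊤ := by
        unfold gabs
        exact if_neg fun h => hc (Or.symm h)
      rw [hg1]
      unfold starFP
      rw [WithTop.recTopCoe_top]
      exact le_top
  · intro t u hA
    have hg1 : gabs r u t =
        (({w : FlowGraph M | w.X = t.X ∧ w.E = t.E ∧ inflowLe r u.X t.X t.inflow w.inflow} :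
          Set (FlowGraph M)) : FPred M) := by
      unfold gabs
      exact if_pos (Or.inr hA)
    have hg2 : gabs r t u =
        (({w : FlowGraph M | w.X = u.X ∧ w.E = u.E ∧ inflowLe r t.X u.X u.inflow w.inflow} :
          Set (FlowGraph M)) : FPred M) := by
      unfold gabs
      exact if_pos (Or.inl hA)
    rw [hg1, hg2]
    unfold starFP memFP
    simp only [WithTop.recTopCoe_coe]
    exact main t u hA
end
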